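/- Let S : ℝ³ → ℝ³ be the positive operator with matrix rows (1,0,0), (1/3,1/3,1/3), (0,0,1). Then S is a Markov operator (positive and S𝟙 = 𝟙), its fixed space ker(I − S) is spanned by (1,1,1) and (1,0,−1), and this fixed space is not a sublattice of ℝ³ (it is not closed under taking absolute values), although it is a lattice subspace. -/

import Mathlib

/-- Example: the Markov operator `S` on `ℝ³` with matrix rows
`(1,0,0)`, `(1/3,1/3,1/3)`, `(0,0,1)`: it is positive, fixes the constant vector
`𝟙`, its fixed space is spanned by `(1,1,1)` and `(1,0,-1)`, this fixed space is
not a sublattice of `ℝ³` (not closed under absolute value), but it is a lattice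
subspace (every pair of fixed vectors has a least upper bound within the fixed
space). -/
theorem markov_fixed_space_lattice_subspace_not_sublattice :
    let S : (Fin 3 → ℝ) →ₗ[ℝ] (Fin 3 → ℝ) :=
      Matrix.toLin' !![1, 0, 0; 1/3, 1/3, 1/3; 0, 0, 1]
    -- `S` is positive:
    (∀ x : Fin 3 → ℝ, 0 ≤ x → 0 ≤ S x) ∧
    -- `S` is Markov:
    S (fun _ => 1) = (fun _ => 1) ∧
    -- the fixed space of `S` is spanned by `(1,1,1)` and `(1,0,-1)`:
    LinearMap.ker (1 - S) =
      Submodule.span ℝ {![1, 1, 1], ![1, 0, -1]} ∧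
    -- the fixed space is not a sublattice of `ℝ³`:
    (∃ f ∈ LinearMap.ker (1 - S), |f| ∉ LinearMap.ker (1 - S)) ∧
    -- but it is a lattice subspace of `ℝ³`:
    (∀ f ∈ LinearMap.ker (1 - S), ∀ g ∈ LinearMap.ker (1 - S),
      ∃ m : Fin 3 → ℝ, IsLeast
        {h : Fin 3 → ℝ | h ∈ LinearMap.ker (1 - S) ∧ f ≤ h ∧ g ≤ h} m) := by
  intro S
  -- the key characterization of the fixed space
  have hker : ∀ x : Fin 3 → ℝ,
      x ∈ LinearMap.ker (1 - S) ↔ x 0 + x 2 = 2 * x 1 := by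
    intro x
    simp [LinearMap.mem_ker, LinearMap.sub_apply, S,
      Matrix.toLin'_apply, Matrix.mulVec, dotProduct, Fin.sum_univ_three,
      funext_iff, Fin.forall_fin_succ, Matrix.vecHead, Matrix.vecTail]
    constructor <;> (intro h; linarith)
  refine ⟨?_, ?_, ?_, ?_, ?_⟩
  · -- positivity
    intro x hx
    have h0 := hx 0
    have h1 := hx 1
    have h2 := hx 2
    simp only [Pi.zero_apply] at h0 h1 h2
    intro i
    fin_cases i <;>
      simp [S, Matrix.toLin'_apply, Matrix.mulVec, dotProduct,
        Fin.sum_univ_three, Matrix.vecHead, Matrix.vecTail] <;>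
      linarith
  · -- Markov
    funext i
    fin_cases i <;>
      simp [S, Matrix.toLin'_apply, Matrix.mulVec, dotProduct,
        Fin.sum_univ_three, Matrix.vecHead, Matrix.vecTail] <;>
      norm_num
  · -- fixed space equals span
    apply le_antisymm
    · intro x hx
      rw [hker] at hx
      have : x = (x 1) • ![1, 1, 1] + ((x 0 - x 2) / 2) • ![1, 0, -1] := by
        funext i
        fin_cases i <;> simp <;> linarith
      rw [this]
      exact Submodule.add_mem _
        (Submodule.smul_mem _ _ (Submodule.subset_span (by simp)))
        (Submodule.smul_mem _ _ (Submodule.subset_span (by simp)))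
    · rw [Submodule.span_le]
      rintro x (rfl | rfl) <;> rw [SetLike.mem_coe, hker] <;> norm_num [Matrix.cons_val_two, Matrix.vecHead, Matrix.vecTail]
  · -- not a sublattice
    refine ⟨![1, 0, -1], by rw [hker]; norm_num [Matrix.cons_val_two, Matrix.vecHead, Matrix.vecTail], ?_⟩
    rw [hker]
    have h0 : |![(1:ℝ), 0, -1]| 0 = 1 := by simp [Pi.abs_apply]
    have h1 : |![(1:ℝ), 0, -1]| 1 = 0 := by simp [Pi.abs_apply]
    have h2 : |![(1:ℝ), 0, -1]| 2 = 1 := by simp [Pi.abs_apply]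
    rw [h0, h1, h2]
    norm_num
  · -- lattice subspace
    intro f hf g hg
    rw [hker] at hf hg
    refine ⟨![max (f 0) (g 0), (max (f 0) (g 0) + max (f 2) (g 2)) / 2,
      max (f 2) (g 2)], ⟨?_, ?_, ?_⟩, ?_⟩
    · rw [hker]; simp; ring
    · intro i
      fin_cases i <;> simp
      · linarith [le_max_left (f 0) (g 0), le_max_left (f 2) (g 2)]
    · intro i
      fin_cases i <;> simp
      · linarith [le_max_right (f 0) (g 0), le_max_right (f 2) (g 2)]
    · rintro h ⟨hh, hfh, hgh⟩
      rw [hker] at hh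
      have hf0 := hfh 0; have hf2 := hfh 2
      have hg0 := hgh 0; have hg2 := hgh 2
      have h0 : f 0 ⊔ g 0 ≤ h 0 := max_le hf0 hg0
      have h2 : f 2 ⊔ g 2 ≤ h 2 := max_le hf2 hg2
      intro i
      fin_cases i <;> simp [max_le_iff]
      · exact ⟨hf0, hg0⟩
      · linarith
      · exact ⟨hf2, hg2⟩
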